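/- Fix σ ∈ {+1, −1}. For A > 0 and λ > 0, let h(λ) = (1 − e^{(−1 + σ i) λ A}) / A. Then: (i) |h(λ)| ≤ C λ / ⟨λA⟩ for a universal constant C; and (ii) for every integer j ≥ 1 and every N ≥ 0 there is a constant C_{j,N} such that |h^{(j)}(λ)| ≤ C_{j,N} A^{j−1} / ⟨λA⟩^N. -/

import Mathlib

open Real Complex

noncomputable section

/-- Japanese bracket on ℝ. -/
def japR (t : ℝ) : ℝ := Real.sqrt (1 + t ^ 2)

lemma one_le_japR (t : ℝ) : 1 ≤ japR t := by
  rw [japR]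
  nlinarith [Real.sq_sqrt (show (0:ℝ) ≤ 1 + t^2 by positivity), Real.sqrt_nonneg (1 + t^2)]

lemma japR_pos (t : ℝ) : 0 < japR t := lt_of_lt_of_le one_pos (one_le_japR t)

lemma japR_le_one_add {t : ℝ} (ht : 0 ≤ t) : japR t ≤ 1 + t := by
  rw [japR]
  calc Real.sqrt (1 + t^2) ≤ Real.sqrt ((1+t)^2) := Real.sqrt_le_sqrt (by nlinarith)
    _ = 1 + t := Real.sqrt_sq (by linarith)

lemma hasDerivAt_cexp_mul (c : ℂ) (x : ℝ) :
    HasDerivAt (fun t : ℝ => Complex.exp (c * t)) (c * Complex.exp (c * x)) x := by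
  have h : HasDerivAt (fun w : ℂ => Complex.exp (c * w)) (c * Complex.exp (c * x)) (x : ℂ) := by
    simpa [mul_comm] using ((hasDerivAt_id (x:ℂ)).const_mul c).cexp
  exact h.comp_ofReal

lemma iter_const_mul_exp (a c : ℂ) (j : ℕ) :
    iteratedDeriv j (fun t : ℝ => a * Complex.exp (c * t))
      = fun t : ℝ => a * c ^ j * Complex.exp (c * t) := by
  induction j with
  | zero => simp
  | succ n ih =>
    rw [iteratedDeriv_succ, ih]
    funext x
    rw [deriv_const_mul _ (hasDerivAt_cexp_mul c x).differentiableAt,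
      (hasDerivAt_cexp_mul c x).deriv]
    ring

lemma iter_f (c : ℂ) (A : ℂ) (m : ℕ) :
    iteratedDeriv (m+1) (fun t : ℝ => (1 - Complex.exp (c * t)) / A)
      = fun t : ℝ => -(c ^ (m+1) / A) * Complex.exp (c * t) := by
  have hd : deriv (fun t : ℝ => (1 - Complex.exp (c * t)) / A)
      = fun x : ℝ => (-c / A) * Complex.exp (c * x) := by
    funext x
    rw [(((hasDerivAt_cexp_mul c x).const_sub 1).div_const A).deriv]
    ring
  rw [iteratedDeriv_succ', hd, iter_const_mul_exp]
  funext t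
  ring

-- key growth lemma
lemma jap_pow_le (N : ℝ) (hN : 0 ≤ N) :
    ∃ D : ℝ, 0 < D ∧ ∀ t : ℝ, 0 ≤ t → japR t ^ N ≤ D * Real.exp t := by
  set k := ⌈N⌉₊ with hk
  refine ⟨2^k * (k.factorial : ℝ) * 1 + 2^k * (k.factorial : ℝ), by positivity, fun t ht => ?_⟩
  have h1 : japR t ^ N ≤ (1+t) ^ N :=
    Real.rpow_le_rpow (le_of_lt (japR_pos t)) (japR_le_one_add ht) hN
  have h2 : (1+t) ^ N ≤ (1+t) ^ (k:ℝ) :=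
    Real.rpow_le_rpow_of_exponent_le (by linarith) (Nat.le_ceil N)
  have h3 : (1+t) ^ (k:ℝ) = (1+t) ^ k := Real.rpow_natCast _ k
  have h4 : (1+t) ^ k ≤ 2^k * (1 + t^k) := by
    calc (1+t)^k ≤ (2 * max 1 t)^k := by
          apply pow_le_pow_left₀ (by linarith)
          rcases le_total t 1 with h | h
          · simp [max_eq_left h]; linarith
          · rw [max_eq_right h]; linarith
      _ = 2^k * (max 1 t)^k := by rw [mul_pow]
      _ ≤ 2^k * (1 + t^k) := by
          apply mul_le_mul_of_nonneg_left _ (by positivity)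
          rcases le_total t 1 with h | h
          · simp [max_eq_left h]; positivity
          · rw [max_eq_right h]
            nlinarith [pow_nonneg ht k]
  have h5 : t ^ k ≤ (k.factorial : ℝ) * Real.exp t := by
    have := Real.pow_div_factorial_le_exp (x := t) ht k
    rw [div_le_iff₀ (by positivity)] at this
    linarith [this]
  have h6 : (1:ℝ) ≤ Real.exp t := Real.one_le_exp ht
  calc japR t ^ N ≤ (1+t)^k := by rw [← h3]; exact h1.trans h2
    _ ≤ 2^k * (1 + t^k) := h4
    _ ≤ 2^k * (1 + (k.factorial : ℝ) * Real.exp t) := by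
        apply mul_le_mul_of_nonneg_left (by linarith) (by positivity)
    _ ≤ (2^k * (k.factorial : ℝ) * 1 + 2^k * (k.factorial : ℝ)) * Real.exp t := by
        have hF : (1:ℝ) ≤ (k.factorial : ℝ) := by exact_mod_cast Nat.one_le_iff_ne_zero.mpr (Nat.factorial_ne_zero k)
        have h2k : (0:ℝ) < 2^k := by positivity
        nlinarith [mul_le_mul hF h6 zero_le_one (le_trans zero_le_one hF)]

theorem stmt8 (σ : ℝ) (hσ : σ = 1 ∨ σ = -1) :
    (∃ C : ℝ, ∀ (A : ℝ), 0 < A → ∀ (l : ℝ), 0 < l →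
      ‖(1 - Complex.exp ((-1 + σ * Complex.I) * l * A)) / (A : ℂ)‖ ≤ C * l / japR (l * A)) ∧
    (∀ (j : ℕ), 1 ≤ j → ∀ (N : ℝ), 0 ≤ N → ∃ C : ℝ, ∀ (A : ℝ), 0 < A → ∀ (l : ℝ), 0 < l →
      ‖iteratedDeriv j (fun t : ℝ => (1 - Complex.exp ((-1 + σ * Complex.I) * t * A)) / (A : ℂ)) l‖
        ≤ C * A ^ (j - 1) / japR (l * A) ^ N) := by
  have hσ2 : σ ^ 2 = 1 := by rcases hσ with h | h <;> rw [h] <;> norm_num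
  have hS0 : (0:ℝ) ≤ Real.sqrt 2 := Real.sqrt_nonneg 2
  have hSsq : Real.sqrt 2 ^ 2 = 2 := Real.sq_sqrt (by norm_num)
  have hS2 : Real.sqrt 2 ≤ 2 := by nlinarith
  have hnormc : ‖(-1 + (σ:ℂ) * Complex.I)‖ = Real.sqrt 2 := by
    rw [Complex.norm_def, Complex.normSq_apply]
    congr 1
    simp
    nlinarith
  constructor
  · -- part (i)
    refine ⟨4, fun A hA l hl => ?_⟩
    have ht : 0 < l * A := mul_pos hl hA
    have hre : ((-1 + (σ:ℂ) * Complex.I) * l * A).re = -(l * A) := by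
      simp [Complex.mul_re, Complex.mul_im]
    have hnw : ‖((-1 + (σ:ℂ) * Complex.I) * l * A)‖ = Real.sqrt 2 * (l * A) := by
      rw [norm_mul, norm_mul, hnormc, Complex.norm_real, Complex.norm_real,
        Real.norm_of_nonneg hl.le, Real.norm_of_nonneg hA.le]
      ring
    have hJpos := japR_pos (l * A)
    have hnormdiv : ‖(1 - Complex.exp ((-1 + (σ:ℂ) * Complex.I) * l * A)) / (A : ℂ)‖
        = ‖(1 - Complex.exp ((-1 + (σ:ℂ) * Complex.I) * l * A))‖ / A := by
      rw [norm_div, Complex.norm_real, Real.norm_of_nonneg hA.le]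
    rw [hnormdiv]
    rcases le_total (Real.sqrt 2 * (l * A)) 1 with hcase | hcase
    · -- small case
      have habs : ‖((-1 + (σ:ℂ) * Complex.I) * l * A)‖ ≤ 1 := by
        rw [hnw]; exact hcase
      have h1 : ‖(1 - Complex.exp ((-1 + (σ:ℂ) * Complex.I) * l * A))‖
          ≤ 2 * (Real.sqrt 2 * (l * A)) := by
        rw [norm_sub_rev, ← hnw]
        exact Complex.norm_exp_sub_one_le habs
      have h2t : 2 * (l*A)^2 ≤ 1 := by nlinarith [mul_nonneg hS0 ht.le]
      have hJle : japR (l * A) ≤ Real.sqrt 2 := by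
        have h12 : 1 + (l*A)^2 ≤ 2 := by nlinarith
        calc japR (l * A) = Real.sqrt (1 + (l*A)^2) := rfl
          _ ≤ Real.sqrt 2 := Real.sqrt_le_sqrt h12
      have hJpos' := japR_pos (l*A)
      rw [div_le_div_iff₀ hA hJpos]
      calc ‖(1 - Complex.exp ((-1 + (σ:ℂ) * Complex.I) * l * A))‖ * japR (l*A)
          ≤ (2 * (Real.sqrt 2 * (l * A))) * Real.sqrt 2 := by
            apply mul_le_mul h1 hJle hJpos'.le (by positivity)
        _ = 2 * (Real.sqrt 2 * Real.sqrt 2) * (l * A) := by ring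
        _ ≤ 4 * l * A := by nlinarith
    · -- large case
      have h1 : ‖(1 - Complex.exp ((-1 + (σ:ℂ) * Complex.I) * l * A))‖ ≤ 2 := by
        calc ‖(1 - Complex.exp ((-1 + (σ:ℂ) * Complex.I) * l * A))‖
            ≤ ‖(1:ℂ)‖ + ‖Complex.exp ((-1 + (σ:ℂ) * Complex.I) * l * A)‖ := norm_sub_le _ _
          _ ≤ 1 + 1 := by
              rw [norm_one, Complex.norm_exp, hre]
              have : Real.exp (-(l*A)) ≤ 1 := Real.exp_le_one_iff.mpr (by linarith)
              linarith
          _ = 2 := by norm_num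
      have hJle : japR (l * A) ≤ 2 * (l * A) := by
        rw [japR]
        calc Real.sqrt (1 + (l*A)^2) ≤ Real.sqrt ((2*(l*A))^2) := by
              apply Real.sqrt_le_sqrt; nlinarith
          _ = 2 * (l*A) := Real.sqrt_sq (by positivity)
      rw [div_le_div_iff₀ hA hJpos]
      calc ‖(1 - Complex.exp ((-1 + (σ:ℂ) * Complex.I) * l * A))‖ * japR (l*A)
          ≤ 2 * (2 * (l * A)) := by
            apply mul_le_mul h1 hJle (le_of_lt hJpos) (by norm_num)
        _ = 4 * l * A := by ring
  · -- part (ii)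
    intro j hj N hN
    obtain ⟨m, rfl⟩ : ∃ m, j = m + 1 := ⟨j - 1, (Nat.succ_pred_eq_of_pos hj).symm⟩
    obtain ⟨D, hD, hD2⟩ := jap_pow_le N hN
    refine ⟨2 ^ (m+1) * D, fun A hA l hl => ?_⟩
    have ht : 0 < l * A := mul_pos hl hA
    have hfeq : (fun t : ℝ => (1 - Complex.exp ((-1 + (σ:ℂ) * Complex.I) * t * A)) / (A : ℂ))
        = fun t : ℝ => (1 - Complex.exp (((-1 + (σ:ℂ) * Complex.I) * A) * t)) / (A : ℂ) := by
      funext t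
      rw [show ((-1 + (σ:ℂ) * Complex.I) * t * A) = ((-1 + (σ:ℂ) * Complex.I) * A) * t by ring]
    rw [hfeq, iter_f]
    have hnc : ‖((-1 + (σ:ℂ) * Complex.I) * A)‖ = Real.sqrt 2 * A := by
      rw [norm_mul, hnormc, Complex.norm_real, Real.norm_of_nonneg hA.le]
    have hre : (((-1 + (σ:ℂ) * Complex.I) * A) * l).re = -(l * A) := by
      simp [Complex.mul_re, Complex.mul_im]; ring
    have hnorm : ‖-(((-1 + (σ:ℂ) * Complex.I) * A) ^ (m+1) / (A:ℂ))
          * Complex.exp (((-1 + (σ:ℂ) * Complex.I) * A) * l)‖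
        = (Real.sqrt 2 * A) ^ (m+1) / A * Real.exp (-(l*A)) := by
      rw [norm_mul, norm_neg, norm_div, norm_pow, hnc, Complex.norm_real, Real.norm_of_nonneg hA.le,
        Complex.norm_exp, hre]
    rw [hnorm]
    have hJpowpos : 0 < japR (l*A) ^ N := Real.rpow_pos_of_pos (japR_pos _) N
    have hpow : (Real.sqrt 2 * A) ^ (m+1) / A = Real.sqrt 2 ^ (m+1) * A ^ m := by
      rw [mul_pow, pow_succ A m]; field_simp
    have hE : Real.exp (-(l*A)) * Real.exp (l*A) = 1 := by rw [← Real.exp_add]; simp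
    have hmm : m + 1 - 1 = m := by omega
    rw [hmm, le_div_iff₀ hJpowpos]
    calc (Real.sqrt 2 * A) ^ (m+1) / A * Real.exp (-(l*A)) * japR (l*A) ^ N
        ≤ (Real.sqrt 2 * A) ^ (m+1) / A * Real.exp (-(l*A)) * (D * Real.exp (l*A)) := by
          apply mul_le_mul_of_nonneg_left (hD2 _ ht.le)
          positivity
      _ = Real.sqrt 2 ^ (m+1) * A ^ m * D * (Real.exp (-(l*A)) * Real.exp (l*A)) := by
          rw [hpow]; ring
      _ = Real.sqrt 2 ^ (m+1) * A ^ m * D := by rw [hE, mul_one]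
      _ ≤ 2 ^ (m+1) * A ^ m * D := by
          apply mul_le_mul_of_nonneg_right _ hD.le
          apply mul_le_mul_of_nonneg_right _ (by positivity)
          exact pow_le_pow_left₀ hS0 hS2 _
      _ = 2 ^ (m+1) * D * A ^ m := by ring

end
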